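/- Let Γ be the presented group with generators g, h, f and relations h g h⁻¹ = g⁻¹, h f h⁻¹ = f⁻¹, and g f = f g. Then the element f has infinite order in Γ (i.e., f^n = 1 implies n = 0 for every integer n). -/

import Mathlib

/-- The relator set of the presented group
`Γ = ⟨g, h, f | h g h⁻¹ = g⁻¹, h f h⁻¹ = f⁻¹, g f = f g⟩`,
the fundamental group of the spherical tangent bundle of the Klein bottle.
Generator `0` is `g`, generator `1` is `h`, generator `2` is `f`. -/
def kleinSTRels : Set (FreeGroup (Fin 3)) :=
  { FreeGroup.of 1 * FreeGroup.of 0 * (FreeGroup.of 1)⁻¹ * FreeGroup.of 0,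
    FreeGroup.of 1 * FreeGroup.of 2 * (FreeGroup.of 1)⁻¹ * FreeGroup.of 2,
    FreeGroup.of 0 * FreeGroup.of 2 * (FreeGroup.of 0)⁻¹ * (FreeGroup.of 2)⁻¹ }

/-- The presented group `⟨g, h, f | h g h⁻¹ = g⁻¹, h f h⁻¹ = f⁻¹, g f = f g⟩`. -/
abbrev KleinST : Type := PresentedGroup kleinSTRels

def KleinST.g : KleinST := PresentedGroup.of 0
def KleinST.h : KleinST := PresentedGroup.of 1
def KleinST.f : KleinST := PresentedGroup.of 2

/-- Images of the generators in the infinite dihedral group: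
`g ↦ 1`, `h ↦ sr 0`, `f ↦ r 1`. -/
def kleinSTtoD : Fin 3 → DihedralGroup 0
  | 0 => 1
  | 1 => DihedralGroup.sr 0
  | 2 => DihedralGroup.r 1

lemma sr_inv (i : ZMod 0) : (DihedralGroup.sr i)⁻¹ = DihedralGroup.sr i := rfl
lemma r_inv (i : ZMod 0) : (DihedralGroup.r i)⁻¹ = DihedralGroup.r (-i) := rfl

lemma kleinST_rels_hold : ∀ r ∈ kleinSTRels, FreeGroup.lift kleinSTtoD r = 1 := by
  intro r hr
  rcases hr with h | h | h <;> subst h <;>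
    simp [kleinSTtoD, DihedralGroup.one_def, -DihedralGroup.r_zero, DihedralGroup.r_mul_r,
      DihedralGroup.r_mul_sr, DihedralGroup.sr_mul_r, DihedralGroup.sr_mul_sr, sr_inv, r_inv]

/-- In `Γ = ⟨g, h, f | h g h⁻¹ = g⁻¹, h f h⁻¹ = f⁻¹, g f = f g⟩` the element `f` has
infinite order: `f ^ n = 1` implies `n = 0` for every integer `n`. -/
theorem kleinST_f_infinite_order : ∀ n : ℤ, KleinST.f ^ n = 1 → n = 0 := by
  intro n hn
  have := congrArg (PresentedGroup.toGroup kleinST_rels_hold) hn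
  rw [map_zpow, map_one] at this
  rw [show PresentedGroup.toGroup kleinST_rels_hold KleinST.f = DihedralGroup.r 1 from
    PresentedGroup.toGroup.of kleinST_rels_hold] at this
  have hord : ¬ IsOfFinOrder (DihedralGroup.r 1 : DihedralGroup 0) := by
    rw [← orderOf_eq_zero_iff, DihedralGroup.orderOf_r_one]
  have hinj := (injective_zpow_iff_not_isOfFinOrder).2 hord
  have : (DihedralGroup.r 1 : DihedralGroup 0) ^ n = DihedralGroup.r 1 ^ (0 : ℤ) := by
    simpa using this
  exact hinj this
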